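/- Let a1 ∈ SU(2) be the diagonal matrix diag(-e^{iC₁}, -e^{-iC₁}) with sin C₁ ≠ 0, and let a2 = [[p, -q̄],[q, p̄]] ∈ SU(2) (so |p|² + |q|² = 1). If tr(a2) = -2cos C₂ and tr(a1·a2) = -2cos C₃, then |p|² = (cos²C₂ + cos²C₃ + 2cosC₁·cosC₂·cosC₃)/sin²C₁. -/

import Mathlib

open Complex Matrix

theorem su2_p_norm_formula (C₁ C₂ C₃ : ℝ) (p q : ℂ)
    (hC₁ : Real.sin C₁ ≠ 0)
    (hpq : ‖p‖ ^ 2 + ‖q‖ ^ 2 = 1)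
    (a₁ a₂ : Matrix (Fin 2) (Fin 2) ℂ)
    (ha₁ : a₁ = !![-Complex.exp (Complex.I * C₁), 0; 0, -Complex.exp (-(Complex.I * C₁))])
    (ha₂ : a₂ = !![p, -(starRingEnd ℂ) q; q, (starRingEnd ℂ) p])
    (htr₂ : a₂.trace = -2 * Real.cos C₂)
    (htr₃ : (a₁ * a₂).trace = -2 * Real.cos C₃) :
    ‖p‖ ^ 2 =
      (Real.cos C₂ ^ 2 + Real.cos C₃ ^ 2 +
        2 * Real.cos C₁ * Real.cos C₂ * Real.cos C₃) / Real.sin C₁ ^ 2 := by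
  subst ha₁ ha₂
  rw [Matrix.trace_fin_two] at htr₂
  rw [Matrix.trace_fin_two] at htr₃
  have hneg : (-((C₁:ℂ) * Complex.I)) = ((-C₁ : ℝ):ℂ) * Complex.I := by push_cast; ring
  simp [Matrix.mul_apply, Fin.sum_univ_two, mul_comm Complex.I (C₁:ℂ), Complex.exp_mul_I] at htr₂ htr₃
  rw [hneg, Complex.exp_mul_I] at htr₃
  have h2 := congrArg Complex.re htr₂
  have h3 := congrArg Complex.re htr₃
  simp [Complex.add_re, Complex.mul_re, Complex.cos_ofReal_re, Complex.sin_ofReal_re,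
    Complex.cos_ofReal_im, Complex.sin_ofReal_im] at h2 h3
  rw [Complex.sq_norm, Complex.normSq_apply]
  have hs := Real.sin_sq_add_cos_sq C₁
  have hre : p.re = -Real.cos C₂ := by linarith
  have him : Real.sin C₁ * p.im = -(Real.cos C₁ * Real.cos C₂) - Real.cos C₃ := by
    rw [hre] at h3; linarith
  have h5 : (Real.sin C₁ * p.im)^2 = (-(Real.cos C₁ * Real.cos C₂) - Real.cos C₃)^2 := by
    rw [him]
  field_simp
  linear_combination Real.sin C₁^2 * (p.re - Real.cos C₂) * hre + h5 + Real.cos C₂^2 * hs
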